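/- Let G be a finite abelian group with |G| ≥ 3. If U is a minimal zero-sum sequence over G of length |U| = D(G), then the set of subsequence sums Σ(U) equals G. -/
import Mathlib


open Multiset

/-- A minimal zero-sum sequence over `G`: a nonempty zero-sum sequence with no
proper nonempty zero-sum subsequence. -/
def IsMinZeroSum {G : Type*} [AddCommGroup G] (S : Multiset G) : Prop :=
  S ≠ 0 ∧ S.sum = 0 ∧ ∀ T : Multiset G, T ≤ S → T ≠ 0 → T ≠ S → T.sum ≠ 0

/-- The Davenport constant of `G`: the maximal length of a minimal zero-sum
sequence over `G`. -/
noncomputable def DavenportConstant (G : Type*) [AddCommGroup G] : ℕ :=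
  sSup {n : ℕ | ∃ S : Multiset G, IsMinZeroSum S ∧ Multiset.card S = n}

/-- The set of lengths of a zero-sum sequence `A`: the set of all `k` such that
`A` can be written as a product of `k` minimal zero-sum sequences. -/
def LengthsSet {G : Type*} [AddCommGroup G] (A : Multiset G) : Set ℕ :=
  {k : ℕ | ∃ f : Multiset (Multiset G), Multiset.card f = k ∧
    (∀ S ∈ f, IsMinZeroSum S) ∧ f.sum = A}

/-- A factorization of a zero-sum sequence `A` into minimal zero-sum sequences. -/
def IsFactorization {G : Type*} [AddCommGroup G] (A : Multiset G)
    (z : Multiset (Multiset G)) : Prop :=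
  (∀ S ∈ z, IsMinZeroSum S) ∧ z.sum = A

/-- The distance between two factorizations. -/
def factDist {G : Type*} [AddCommGroup G] [DecidableEq G]
    (z z' : Multiset (Multiset G)) : ℕ :=
  max (Multiset.card (z - z')) (Multiset.card (z' - z))

/-- The catenary degree of the monoid of zero-sum sequences over `G`: the smallest
`N` such that any two factorizations of an element can be connected by a chain of
factorizations in which consecutive members have distance at most `N`. -/
noncomputable def CatenaryDegree (G : Type*) [AddCommGroup G] [DecidableEq G] : ℕ :=
  sInf {N : ℕ | ∀ (A : Multiset G) (z z' : Multiset (Multiset G)),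
    IsFactorization A z → IsFactorization A z' →
    Relation.ReflTransGen (fun x y => IsFactorization A y ∧ factDist x y ≤ N) z z'}

/-- The invariant `ℸ(G) = sup { min (L \ {2}) : 2 ∈ L ∈ 𝓛(G) }`. -/
noncomputable def Daleth (G : Type*) [AddCommGroup G] : ℕ :=
  sSup {m : ℕ | ∃ A : Multiset G, A.sum = 0 ∧ 2 ∈ LengthsSet A ∧
    (LengthsSet A \ {2}).Nonempty ∧ m = sInf (LengthsSet A \ {2})}

lemma minzs_card_le {G : Type*} [AddCommGroup G] [Fintype G]
    (S : Multiset G) (h : IsMinZeroSum S) : Multiset.card S ≤ Fintype.card G := by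
  set L := S.toList with hL
  have hSL : (↑L : Multiset G) = S := S.coe_toList
  have key : ∀ i j : Fin L.length, i < j →
      (L.take (i+1)).sum ≠ (L.take (j+1)).sum := by
    intro i j hij heq
    set M := (L.drop (i+1)).take (j - i) with hM
    have hsub : List.Sublist M L := (List.take_sublist _ _).trans (List.drop_sublist _ _)
    have hle : (↑M : Multiset G) ≤ S := hSL ▸ (Multiset.coe_le.mpr hsub.subperm)
    have hlenM : M.length = j - i := by
      have : (j : ℕ) - i ≤ L.length - (i+1) := by omega
      simp [hM, List.length_take, List.length_drop]
      omega
    have hMne : (↑M : Multiset G) ≠ 0 := by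
      have : M.length ≠ 0 := by omega
      simpa [Multiset.coe_eq_zero, ← List.length_eq_zero_iff] using this
    have hMneS : (↑M : Multiset G) ≠ S := by
      intro hcontra
      have : Multiset.card (↑M : Multiset G) = Multiset.card S := by rw [hcontra]
      rw [Multiset.coe_card, hlenM, ← hSL, Multiset.coe_card] at this
      omega
    have hsplit : L.take (j+1) = L.take (i+1) ++ M := by
      have : (j : ℕ) + 1 = (i+1) + (j - i) := by omega
      rw [this, List.take_add]
    have hsum : M.sum = 0 := by
      have := congrArg List.sum hsplit
      rw [List.sum_append, heq] at this
      exact (left_eq_add.mp this)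
    exact h.2.2 ↑M hle hMne hMneS (by simpa using hsum)
  have hinj : Function.Injective (fun i : Fin L.length => (L.take (i+1)).sum) := by
    intro i j hij
    by_contra hne
    rcases lt_or_gt_of_ne (fun h' : i = j => hne h') with h' | h'
    · exact key i j h' hij
    · exact key j i h' hij.symm
  have := Fintype.card_le_of_injective _ hinj
  simpa [← hSL, Multiset.coe_card] using this

lemma zsfree_card_lt {G : Type*} [AddCommGroup G] [Fintype G]
    (S : Multiset G) (hS : ∀ T : Multiset G, T ≤ S → T ≠ 0 → T.sum ≠ 0) :
    Multiset.card S + 1 ≤ DavenportConstant G := by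
  classical
  set a := -S.sum with ha
  set S' : Multiset G := a ::ₘ S with hS'
  have hmin : IsMinZeroSum S' := by
    refine ⟨by simp [hS'], by simp [hS', ha], ?_⟩
    intro T hT hTne hTneS' hTsum
    by_cases haT : a ∈ T
    · set T' := T.erase a with hT'
      have hTcons : a ::ₘ T' = T := Multiset.cons_erase haT
      have hT'le : T' ≤ S := by
        have := Multiset.erase_le_erase a hT
        simpa [hT', hS'] using this
      have hT'sum : T'.sum = S.sum := by
        have : (a ::ₘ T').sum = 0 := by rw [hTcons]; exact hTsum
        rw [Multiset.sum_cons] at this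
        have := this
        rw [ha] at this
        exact (neg_add_eq_zero.mp this).symm
      have hT'neS : T' ≠ S := by
        intro hcontra
        exact hTneS' (by rw [← hTcons, hcontra])
      have hT'lt : T' < S := lt_of_le_of_ne hT'le hT'neS
      have hrem : T' + (S - T') = S := add_tsub_cancel_of_le hT'le
      have hremne : S - T' ≠ 0 := by
        intro hcontra
        have : Multiset.card S = Multiset.card T' := by
          rw [← hrem, hcontra]; simp
        have hlt := Multiset.card_lt_card hT'lt
        omega
      have hremle : S - T' ≤ S := Multiset.sub_le_self _ _
      have hremsum : (S - T').sum = 0 := by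
        have := congrArg Multiset.sum hrem
        rw [Multiset.sum_add, hT'sum] at this
        exact add_eq_left.mp this
      exact hS _ hremle hremne hremsum
    · have hTleS : T ≤ S := by
        rw [Multiset.le_iff_count]
        intro b
        have := (Multiset.le_iff_count.mp hT) b
        by_cases hb : b = a
        · simp [hb, Multiset.count_eq_zero_of_notMem haT]
        · simpa [hS', Multiset.count_cons, hb] using this
      exact hS T hTleS hTne hTsum
  have hbdd : BddAbove {n : ℕ | ∃ S : Multiset G, IsMinZeroSum S ∧ Multiset.card S = n} := by
    refine ⟨Fintype.card G, ?_⟩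
    rintro n ⟨W, hW, rfl⟩
    exact minzs_card_le W hW
  have hmem : Multiset.card S' ∈
      {n : ℕ | ∃ S : Multiset G, IsMinZeroSum S ∧ Multiset.card S = n} := ⟨S', hmin, rfl⟩
  have := le_csSup hbdd hmem
  simpa [hS', DavenportConstant] using this

theorem statement17 {G : Type*} [AddCommGroup G] [Fintype G]
    (hG : 3 ≤ Fintype.card G)
    (U : Multiset G) (hU : IsMinZeroSum U)
    (hcard : Multiset.card U = DavenportConstant G) :
    {g : G | ∃ T ≤ U, T ≠ 0 ∧ T.sum = g} = Set.univ := by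
  classical
  ext g
  simp only [Set.mem_setOf_eq, Set.mem_univ, iff_true]
  by_cases hg : g = 0
  · exact ⟨U, le_refl U, hU.1, by rw [hU.2.1, hg]⟩
  obtain ⟨u, hu⟩ := Multiset.exists_mem_of_ne_zero hU.1
  set W : Multiset G := (-g) ::ₘ U.erase u with hW
  have hcardU : 1 ≤ Multiset.card U := by
    exact Multiset.card_pos.mpr hU.1
  have hcardW : Multiset.card W = Multiset.card U := by
    rw [hW, Multiset.card_cons, Multiset.card_erase_of_mem hu, Nat.pred_eq_sub_one]
    omega
  have hWnotfree : ¬ (∀ T : Multiset G, T ≤ W → T ≠ 0 → T.sum ≠ 0) := by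
    intro hfree
    have := zsfree_card_lt W hfree
    rw [hcardW, hcard] at this
    omega
  push_neg at hWnotfree
  obtain ⟨T, hTW, hTne, hTsum⟩ := hWnotfree
  by_cases hgT : (-g) ∈ T
  · set T' := T.erase (-g) with hT'
    have hTcons : (-g) ::ₘ T' = T := Multiset.cons_erase hgT
    have hT'le : T' ≤ U := by
      have := Multiset.erase_le_erase (-g) hTW
      have h2 : T' ≤ U.erase u := by simpa [hT', hW] using this
      exact h2.trans (Multiset.erase_le u U)
    have hT'sum : T'.sum = g := by
      have : ((-g) ::ₘ T').sum = 0 := by rw [hTcons]; exact hTsum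
      rw [Multiset.sum_cons] at this
      exact (neg_add_eq_zero.mp this).symm
    have hT'ne : T' ≠ 0 := by
      intro hcontra
      rw [hcontra, Multiset.sum_zero] at hT'sum
      exact hg hT'sum.symm
    exact ⟨T', hT'le, hT'ne, hT'sum⟩
  · have hTleU : T ≤ U := by
      have hTerase : T ≤ U.erase u := by
        rw [Multiset.le_iff_count]
        intro b
        have := (Multiset.le_iff_count.mp hTW) b
        by_cases hb : b = -g
        · simp [hb, Multiset.count_eq_zero_of_notMem hgT]
        · simpa [hW, Multiset.count_cons, hb] using this
      exact hTerase.trans (Multiset.erase_le u U)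
    have hTneU : T ≠ U := by
      intro hcontra
      have h1 : Multiset.card T ≤ Multiset.card (U.erase u) :=
        Multiset.card_le_card (by
          rw [Multiset.le_iff_count]
          intro b
          have := (Multiset.le_iff_count.mp hTW) b
          by_cases hb : b = -g
          · simp [hb, Multiset.count_eq_zero_of_notMem hgT]
          · simpa [hW, Multiset.count_cons, hb] using this)
      rw [Multiset.card_erase_of_mem hu, Nat.pred_eq_sub_one, hcontra] at h1
      omega
    exact absurd hTsum (hU.2.2 T hTleU hTne hTneU)
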